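/- Let R = 4, B = {0,2}, L = {0,3,b} with b ≡ 3 (mod 4), and suppose the digit set {0,3} has the unique extreme cycle {−1}. If M is a nontrivial min-set for L, then every point x₀ ∈ M can be written x₀ = −4ⁿ + 4^{n−1} l_{n−1} + ⋯ + 4 l₁ + l₀ for some n ≥ 0 and l₀,…,l_{n−1} ∈ {0,3}, and there is at most one nontrivial min-set for L. -/

import Mathlib

open Complex

/-- `m_B(x) = (1 + e^{2πi·2x})/2` for `R = 4`, `B = {0,2}`. -/
noncomputable def mB (x : ℝ) : ℂ :=
  (1 + Complex.exp (2 * Real.pi * Complex.I * (2 * x))) / 2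

/-- The transition maps `g_l(t) = (t - l)/4`. -/
noncomputable def g (l : ℤ) (t : ℝ) : ℝ := (t - (l : ℝ)) / 4

/-- A set `M` is invariant for the digit set `L`: possible transitions stay in `M`. -/
def IsInvSet (L : Finset ℤ) (M : Set ℝ) : Prop :=
  ∀ t ∈ M, ∀ l ∈ L, mB (g l t) ≠ 0 → g l t ∈ M

/-- A min-set: a nonempty finite invariant set which is minimal among such sets. -/
def IsMinSet (L : Finset ℤ) (M : Set ℝ) : Prop :=
  M.Finite ∧ M.Nonempty ∧ IsInvSet L M ∧
    ∀ M' ⊆ M, M'.Nonempty → IsInvSet L M' → M' = M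

lemma mB_eq_zero_iff (x : ℝ) : mB x = 0 ↔ ∃ k : ℤ, Odd k ∧ (4:ℝ) * x = k := by
  unfold mB
  rw [div_eq_zero_iff]
  have h2 : (2:ℂ) ≠ 0 := by norm_num
  simp only [h2, or_false]
  have hpi : (Real.pi : ℂ) ≠ 0 := by exact_mod_cast Real.pi_ne_zero
  constructor
  · intro h
    have h' : Complex.exp (2 * Real.pi * Complex.I * (2 * x)) = Complex.exp (Real.pi * Complex.I) := by
      rw [Complex.exp_pi_mul_I]
      linear_combination h
    rw [Complex.exp_eq_exp_iff_exists_int] at h'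
    obtain ⟨n, hn⟩ := h'
    refine ⟨1 + 2*n, ⟨n, by ring⟩, ?_⟩
    have hc : (Real.pi : ℂ) * Complex.I * (4 * x) = (Real.pi:ℂ) * Complex.I * (1 + 2*n) := by
      linear_combination hn
    have h4 := mul_left_cancel₀ (mul_ne_zero hpi Complex.I_ne_zero) hc
    have : ((4 * x : ℝ) : ℂ) = (((1 + 2*n : ℤ) : ℝ) : ℂ) := by
      push_cast
      linear_combination h4
    exact_mod_cast this
  · rintro ⟨k, ⟨n, hk⟩, hx⟩
    have hxc : (4:ℂ) * x = 2*(n:ℂ) + 1 := by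
      have : ((4 * x : ℝ) : ℂ) = (((2*n+1 : ℤ) : ℝ) : ℂ) := by
        rw [hx]; subst hk; push_cast; ring
      push_cast at this; linear_combination this
    have harg : (2:ℂ) * Real.pi * Complex.I * (2 * x)
        = Real.pi * Complex.I + n * (2 * Real.pi * Complex.I) := by
      linear_combination (Real.pi : ℂ) * Complex.I * hxc
    rw [harg, Complex.exp_add, Complex.exp_pi_mul_I, Complex.exp_int_mul_two_pi_mul_I]
    ring

lemma mB_int (m : ℤ) : mB m = 1 := by
  unfold mB
  have : (2:ℂ) * Real.pi * Complex.I * (2 * (m:ℝ)) = ((2*m : ℤ):ℂ) * (2 * Real.pi * Complex.I) := by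
    push_cast; ring
  rw [this, Complex.exp_int_mul_two_pi_mul_I]
  norm_num

lemma mB_g_ne_zero (l : ℤ) (t : ℝ) (h : ∀ k : ℤ, Odd k → t - (l:ℝ) ≠ k) : mB (g l t) ≠ 0 := by
  rw [Ne, g, mB_eq_zero_iff]
  rintro ⟨k, hk, he⟩
  exact h k hk (by linarith)

lemma mB_g_eq_zero (l k : ℤ) (t : ℝ) (hk : Odd k) (h : t - (l:ℝ) = k) : mB (g l t) = 0 := by
  rw [g, mB_eq_zero_iff]
  exact ⟨k, hk, by rw [← h]; ring⟩

lemma castdiv (n : ℤ) : ((n:ℝ) - ((n % 4 : ℤ) : ℝ)) / 4 = ((n / 4 : ℤ) : ℝ) := by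
  have h : (n - n % 4 : ℤ) = 4 * (n / 4) := by omega
  have h' : (n:ℝ) - ((n % 4 : ℤ):ℝ) = 4 * ((n / 4 : ℤ):ℝ) := by exact_mod_cast h
  rw [h']; ring

lemma digits (n : ℕ) : ∀ m : ℤ, (fun z : ℤ => z / 4)^[n] m = -1 →
    (m:ℝ) = -(4:ℝ)^n + ∑ i ∈ Finset.range n,
      (4:ℝ)^i * (((fun z : ℤ => z / 4)^[i] m % 4 : ℤ) : ℝ) := by
  induction n with
  | zero =>
    intro m h
    simp only [Function.iterate_zero, id_eq] at h
    subst h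
    norm_num
  | succ n ih =>
    intro m h
    have h' : (fun z : ℤ => z / 4)^[n] (m / 4) = -1 := by
      rw [← Function.iterate_succ_apply]; exact h
    have ih' := ih (m / 4) h'
    have hiter : ∀ i : ℕ, (fun z : ℤ => z / 4)^[i+1] m = (fun z : ℤ => z / 4)^[i] (m / 4) :=
      fun i => by rw [Function.iterate_succ_apply]
    have hm4 : (m:ℝ) = 4 * ((m / 4 : ℤ):ℝ) + ((m % 4 : ℤ):ℝ) := by
      have : m = 4 * (m / 4) + m % 4 := by omega
      exact_mod_cast this
    rw [Finset.sum_range_succ']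
    have hsum : ∑ i ∈ Finset.range n,
        (4:ℝ)^(i+1) * (((fun z : ℤ => z / 4)^[i+1] m % 4 : ℤ) : ℝ)
        = 4 * ∑ i ∈ Finset.range n,
            (4:ℝ)^i * (((fun z : ℤ => z / 4)^[i] (m/4) % 4 : ℤ) : ℝ) := by
      rw [Finset.mul_sum]
      refine Finset.sum_congr rfl fun i _ => ?_
      rw [hiter i]; ring
    rw [hsum]
    simp only [Function.iterate_zero, id_eq, pow_zero, one_mul]
    linear_combination hm4 + 4 * ih'

theorem stmt18_key (b : ℤ) (hb : b % 4 = 3)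
    (hunique : ∀ C : Set ℝ, C.Finite → C.Nonempty →
      (∀ t ∈ C, ‖mB t‖ = 1) →
      (∀ t ∈ C, ∃ l ∈ ({0, 3} : Finset ℤ), (t - (l : ℝ)) / 4 ∈ C) →
      (∀ C' ⊆ C, C'.Nonempty →
        (∀ t ∈ C', ∃ l ∈ ({0, 3} : Finset ℤ), (t - (l : ℝ)) / 4 ∈ C') → C' = C) →
      C = {0} ∨ C = {-1})
    (M : Set ℝ) (hM : IsMinSet ({0, 3, b} : Finset ℤ) M) (hnt : M ≠ {0}) :
    (-1 : ℝ) ∈ M ∧ (∀ x ∈ M, ∃ (n : ℕ) (lw : ℕ → ℤ), (∀ i < n, lw i = 0 ∨ lw i = 3) ∧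
      x = -(4 : ℝ) ^ n + ∑ i ∈ Finset.range n, (4 : ℝ) ^ i * (lw i : ℝ)) := by
  obtain ⟨hfin, hne, hinv, hmin⟩ := hM
  have h0L : (0:ℤ) ∈ ({0, 3, b} : Finset ℤ) := by simp
  have h3L : (3:ℤ) ∈ ({0, 3, b} : Finset ℤ) := by simp
  have hbL : b ∈ ({0, 3, b} : Finset ℤ) := by simp
  -- every element of M is an integer
  have intM : ∀ t ∈ M, ∃ m : ℤ, t = (m:ℝ) := by
    intro t ht
    by_contra hni
    push_neg at hni
    have claim : ∀ n : ℕ, t / 4^n ∈ M ∧ ∀ m : ℤ, t / 4^n ≠ (m:ℝ) := by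
      intro n
      induction n with
      | zero => simpa using ⟨ht, hni⟩
      | succ n ih =>
        obtain ⟨hmem, hint⟩ := ih
        have hstep : g 0 (t / 4^n) ∈ M := by
          refine hinv _ hmem 0 h0L (mB_g_ne_zero 0 _ ?_)
          intro k hk he
          exact hint k (by push_cast at he ⊢; linarith)
        have hgeq : g 0 (t / 4^n) = t / 4^(n+1) := by
          rw [g]; push_cast; rw [pow_succ]; ring
        rw [hgeq] at hstep
        refine ⟨hstep, fun m hm => ?_⟩
        refine hint (4 * m) ?_
        have : t / 4^(n+1) = (m:ℝ) := hm
        push_cast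
        rw [pow_succ] at this
        have h4 : (4:ℝ)^n ≠ 0 := by positivity
        field_simp at this ⊢
        linarith
    have ht0 : t ≠ 0 := fun h => hni 0 (by simp [h])
    have hinj : Function.Injective (fun n : ℕ => t / 4^n) := by
      intro n m hnm
      simp only at hnm
      have h4n : (4:ℝ)^n ≠ 0 := by positivity
      have h4m : (4:ℝ)^m ≠ 0 := by positivity
      rw [div_eq_div_iff h4n h4m] at hnm
      have hpow : (4:ℝ)^n = (4:ℝ)^m := by
        have := mul_left_cancel₀ ht0 (by linarith [hnm] : t * ((4:ℝ)^m) = t * ((4:ℝ)^n))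
        linarith
      have : ((4^n : ℕ) : ℝ) = ((4^m : ℕ) : ℝ) := by push_cast; exact hpow
      exact Nat.pow_right_injective (by norm_num) (Nat.cast_injective this)
    exact hfin.not_infinite (Set.infinite_of_injective_forall_mem hinj fun n => (claim n).1)
  -- residues
  have modM : ∀ m : ℤ, (m:ℝ) ∈ M → m % 4 = 0 ∨ m % 4 = 3 := by
    intro m hm
    by_contra hcon
    push_neg at hcon
    have h12 : m % 4 = 1 ∨ m % 4 = 2 := by omega
    rcases h12 with h1 | h2
    · -- m ≡ 1: transition by 3 gives non-integer
      have hstep : g 3 (m:ℝ) ∈ M := by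
        refine hinv _ hm 3 h3L (mB_g_ne_zero 3 _ ?_)
        intro k hk he
        have : (k:ℝ) = ((m - 3 : ℤ):ℝ) := by push_cast at he ⊢; linarith
        have hk' : k = m - 3 := by exact_mod_cast this
        rw [Int.odd_iff] at hk
        omega
      obtain ⟨j, hj⟩ := intM _ hstep
      rw [g] at hj
      have : ((m - 3 : ℤ):ℝ) = ((4 * j : ℤ):ℝ) := by push_cast; push_cast at hj; linarith
      have : m - 3 = 4 * j := by exact_mod_cast this
      omega
    · -- m ≡ 2: transition by 0 gives non-integer
      have hstep : g 0 (m:ℝ) ∈ M := by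
        refine hinv _ hm 0 h0L (mB_g_ne_zero 0 _ ?_)
        intro k hk he
        have : (k:ℝ) = (m:ℝ) := by push_cast at he ⊢; linarith
        have hk' : k = m := by exact_mod_cast this
        rw [Int.odd_iff] at hk
        omega
      obtain ⟨j, hj⟩ := intM _ hstep
      rw [g] at hj
      have : (m:ℝ) = ((4 * j : ℤ):ℝ) := by push_cast; push_cast at hj; linarith
      have : m = 4 * j := by exact_mod_cast this
      omega
  -- closure under ψ = (· / 4)
  have psiM : ∀ m : ℤ, (m:ℝ) ∈ M → ((m / 4 : ℤ):ℝ) ∈ M := by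
    intro m hm
    have hmod := modM m hm
    have hlL : (m % 4) ∈ ({0, 3, b} : Finset ℤ) := by
      rcases hmod with h | h <;> simp [h]
    have hne0 : mB (g (m % 4) (m:ℝ)) ≠ 0 := by
      refine mB_g_ne_zero _ _ ?_
      intro k hk he
      have : (k:ℝ) = ((m - m % 4 : ℤ):ℝ) := by push_cast; linarith
      have hk' : k = m - m % 4 := by exact_mod_cast this
      rw [Int.odd_iff] at hk
      omega
    have := hinv _ hm _ hlL hne0
    rwa [g, castdiv] at this
  set ψ : ℤ → ℤ := fun z => z / 4 with hψ
  -- iterates stay in M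
  have iterM : ∀ m : ℤ, (m:ℝ) ∈ M → ∀ k : ℕ, ((ψ^[k] m : ℤ):ℝ) ∈ M := by
    intro m hm k
    induction k with
    | zero => simpa using hm
    | succ k ih =>
      rw [Function.iterate_succ_apply']
      exact psiM _ ih
  -- every integer point reaches -1
  have reach : ∀ m : ℤ, (m:ℝ) ∈ M → ∃ n : ℕ, ψ^[n] m = -1 := by
    intro m hm
    -- find a cycle
    have hninj : ¬ Function.Injective (fun k : ℕ => ((ψ^[k] m : ℤ):ℝ)) := by
      intro hinj
      exact hfin.not_infinite (Set.infinite_of_injective_forall_mem hinj (iterM m hm))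
    rw [Function.not_injective_iff] at hninj
    obtain ⟨i, j, hij, hne'⟩ := hninj
    have hijz : ψ^[i] m = ψ^[j] m := by exact_mod_cast hij
    -- wlog i < j
    obtain ⟨i, j, hlt, hijz⟩ : ∃ i j : ℕ, i < j ∧ ψ^[i] m = ψ^[j] m := by
      rcases lt_or_gt_of_ne hne' with h | h
      · exact ⟨i, j, h, hijz⟩
      · exact ⟨j, i, h, hijz.symm⟩
    set p : ℤ := ψ^[i] m with hp
    set d : ℕ := j - i with hd
    have hd0 : 0 < d := by omega
    have hpd : ψ^[d] p = p := by
      show ψ^[j - i] (ψ^[i] m) = ψ^[i] m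
      rw [← Function.iterate_add_apply, show j - i + i = j from by omega]
      exact hijz.symm
    have period : ∀ q k : ℕ, ψ^[k + d * q] p = ψ^[k] p := by
      intro q
      induction q with
      | zero => simp
      | succ q ihq =>
        intro k
        have : k + d * (q + 1) = (k + d * q) + d := by ring
        rw [this, Function.iterate_add_apply, hpd, ihq]
    have pmem : ∀ k : ℕ, ((ψ^[k] p : ℤ):ℝ) ∈ M := by
      intro k
      rw [hp, ← Function.iterate_add_apply]
      exact iterM m hm (k + i)
    set C : Set ℝ := Set.range (fun k : ℕ => ((ψ^[k] p : ℤ):ℝ)) with hC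
    have hCsub : C ⊆ M := by rintro _ ⟨k, rfl⟩; exact pmem k
    have hCfin : C.Finite := hfin.subset hCsub
    have hCne : C.Nonempty := ⟨(p:ℝ), 0, by simp⟩
    have habs : ∀ t ∈ C, ‖mB t‖ = 1 := by
      rintro _ ⟨k, rfl⟩
      rw [mB_int]
      simp
    have htrans : ∀ t ∈ C, ∃ l ∈ ({0, 3} : Finset ℤ), (t - (l : ℝ)) / 4 ∈ C := by
      rintro _ ⟨k, rfl⟩
      set n : ℤ := ψ^[k] p with hn
      refine ⟨n % 4, ?_, ?_⟩
      · rcases modM n (pmem k) with h | h <;> simp [h]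
      · rw [castdiv]
        refine ⟨k + 1, ?_⟩
        show ((ψ^[k+1] p : ℤ):ℝ) = ((ψ^[k] p / 4 : ℤ):ℝ)
        rw [Function.iterate_succ_apply']
    have hCmin : ∀ C' ⊆ C, C'.Nonempty →
        (∀ t ∈ C', ∃ l ∈ ({0, 3} : Finset ℤ), (t - (l : ℝ)) / 4 ∈ C') → C' = C := by
      intro C' hsub hne' hprop
      have closure : ∀ k : ℕ, ((ψ^[k] p : ℤ):ℝ) ∈ C' → ((ψ^[k+1] p : ℤ):ℝ) ∈ C' := by
        intro k hk
        set n : ℤ := ψ^[k] p with hn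
        obtain ⟨l, hlmem, hl⟩ := hprop _ hk
        have hl' : ((n:ℝ) - (l:ℝ)) / 4 ∈ C := hsub hl
        obtain ⟨k', hk'⟩ := hl'
        by_cases hcase : l = n % 4
        · rw [hcase, castdiv] at hl
          rw [Function.iterate_succ_apply']
          exact hl
        · exfalso
          have : ((n:ℝ) - (l:ℝ)) / 4 = ((ψ^[k'] p : ℤ):ℝ) := hk'.symm
          have h4 : ((n - l : ℤ):ℝ) = ((4 * ψ^[k'] p : ℤ):ℝ) := by
            push_cast; push_cast at this; linarith
          have h4' : n - l = 4 * ψ^[k'] p := by exact_mod_cast h4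
          have hlv : l = 0 ∨ l = 3 := by
            simpa using hlmem
          rcases modM n (pmem k) with h | h <;> rcases hlv with h' | h' <;> omega
      obtain ⟨t0, ht0⟩ := hne'
      obtain ⟨k0, hk0⟩ := hsub ht0
      rw [← hk0] at ht0
      have forward : ∀ jj : ℕ, ((ψ^[k0 + jj] p : ℤ):ℝ) ∈ C' := by
        intro jj
        induction jj with
        | zero => simpa using ht0
        | succ jj ihj =>
          have : k0 + (jj + 1) = (k0 + jj) + 1 := by ring
          rw [this]
          exact closure _ ihj
      refine Set.Subset.antisymm hsub ?_
      rintro _ ⟨k, rfl⟩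
      have hge : k0 ≤ k + d * k0 := by
        nlinarith [hd0]
      have := forward (k + d * k0 - k0)
      rw [show k0 + (k + d * k0 - k0) = k + d * k0 by omega, period k0 k] at this
      exact this
    rcases hunique C hCfin hCne habs htrans hCmin with hCeq | hCeq
    · -- C = {0}: contradiction with nontriviality
      exfalso
      have hp0 : (p:ℝ) ∈ C := ⟨0, by simp⟩
      rw [hCeq, Set.mem_singleton_iff] at hp0
      have hpz : p = 0 := by exact_mod_cast hp0
      have h0M : (0:ℝ) ∈ M := by
        have := pmem 0
        simp only [Function.iterate_zero, id_eq, hpz] at this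
        exact_mod_cast this
      have hinv0 : IsInvSet ({0, 3, b} : Finset ℤ) {0} := by
        intro t ht l hl hne0
        rw [Set.mem_singleton_iff] at ht
        subst ht
        simp only [Finset.mem_insert, Finset.mem_singleton] at hl
        rcases hl with rfl | rfl | rfl
        · rw [Set.mem_singleton_iff, g]; norm_num
        · exact absurd (mB_g_eq_zero 3 (-3) 0 (by decide) (by norm_num)) hne0
        · refine absurd (mB_g_eq_zero l (-l) 0 ?_ (by push_cast; ring)) hne0
          rw [Int.odd_iff]; omega
      have := hmin {0} (by simpa using h0M) ⟨0, rfl⟩ hinv0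
      exact hnt this.symm
    · -- C = {-1}
      have hp1 : (p:ℝ) ∈ C := ⟨0, by simp⟩
      rw [hCeq, Set.mem_singleton_iff] at hp1
      have : (p:ℝ) = -1 := hp1
      have hpz : p = -1 := by exact_mod_cast this
      exact ⟨i, hpz⟩
  -- conclude
  obtain ⟨t0, ht0⟩ := hne
  obtain ⟨m0, rfl⟩ := intM t0 ht0
  obtain ⟨n0, hn0⟩ := reach m0 ht0
  have hneg1 : (-1:ℝ) ∈ M := by
    have := iterM m0 ht0 n0
    rw [hn0] at this
    push_cast at this
    exact this
  refine ⟨hneg1, ?_⟩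
  intro x hx
  obtain ⟨m, rfl⟩ := intM x hx
  obtain ⟨n, hn⟩ := reach m hx
  refine ⟨n, fun i => ψ^[i] m % 4, fun i _ => modM _ (iterM m hx i), ?_⟩
  exact digits n m hn


/-- for `L = {0,3,b}` with `b ≡ 3 (mod 4)`, assuming the digit set `{0,3}`
has the unique (nontrivial) extreme cycle `{-1}`, every point of a nontrivial min-set `M`
has the form `-4^n + 4^{n-1} l_{n-1} + ⋯ + 4 l₁ + l₀` with digits `lᵢ ∈ {0,3}`, and there
is at most one nontrivial min-set. -/
theorem stmt18 (b : ℤ) (hb : b % 4 = 3)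
    (hunique : ∀ C : Set ℝ, C.Finite → C.Nonempty →
      (∀ t ∈ C, ‖mB t‖ = 1) →
      (∀ t ∈ C, ∃ l ∈ ({0, 3} : Finset ℤ), (t - (l : ℝ)) / 4 ∈ C) →
      (∀ C' ⊆ C, C'.Nonempty →
        (∀ t ∈ C', ∃ l ∈ ({0, 3} : Finset ℤ), (t - (l : ℝ)) / 4 ∈ C') → C' = C) →
      C = {0} ∨ C = {-1})
    (M : Set ℝ) (hM : IsMinSet ({0, 3, b} : Finset ℤ) M) (hnt : M ≠ {0}) :
    (∀ x ∈ M, ∃ (n : ℕ) (lw : ℕ → ℤ), (∀ i < n, lw i = 0 ∨ lw i = 3) ∧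
      x = -(4 : ℝ) ^ n + ∑ i ∈ Finset.range n, (4 : ℝ) ^ i * (lw i : ℝ)) ∧
    (∀ M' : Set ℝ, IsMinSet ({0, 3, b} : Finset ℤ) M' → M' ≠ {0} → M' = M) := by
  have hkey := stmt18_key b hb hunique M hM hnt
  refine ⟨hkey.2, ?_⟩
  intro M' hM' hnt'
  have hkey' := stmt18_key b hb hunique M' hM' hnt'
  obtain ⟨hfin, hne, hinv, hmin⟩ := hM
  obtain ⟨hfin', hne', hinv', hmin'⟩ := hM'
  have hint : IsInvSet ({0, 3, b} : Finset ℤ) (M ∩ M') :=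
    fun t ht l hl h => ⟨hinv t ht.1 l hl h, hinv' t ht.2 l hl h⟩
  have hnei : (M ∩ M').Nonempty := ⟨-1, hkey.1, hkey'.1⟩
  have e1 := hmin (M ∩ M') Set.inter_subset_left hnei hint
  have e2 := hmin' (M ∩ M') Set.inter_subset_right hnei hint
  rw [← e2]
  exact e1
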